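/- Let D be a digraph of maximum out-degree Δ⁺ and let d₁, d₂, …, d_p be non-negative integers satisfying d₁ + d₂ + ⋯ + d_p + (p − 1) ≥ 2Δ⁺. Then D has a p-partition (V₁, V₂, …, V_p) such that Δ⁺(D⟨Vᵢ⟩) ≤ dᵢ for every i ∈ [p]. -/

import Mathlib

set_option linter.unusedSectionVars false
set_option linter.unusedVariables false

/-- The number of out-neighbours of `v` lying in `S`, i.e. the out-degree of `v` in the
subdigraph induced by `S` (when `v ∈ S`). -/
noncomputable def outDegOn {V : Type*} (A : V → V → Prop) (S : Set V) (v : V) : ℕ :=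
  {w | w ∈ S ∧ A v w}.ncard

/-- The out-degree `d⁺_D(v)` of `v` in the digraph with arc relation `A`. -/
noncomputable def outDeg {V : Type*} (A : V → V → Prop) (v : V) : ℕ :=
  {w | A v w}.ncard

/-- The maximum out-degree `Δ⁺(D⟨S⟩)` of the subdigraph induced by `S`. -/
noncomputable def maxOutDegOn {V : Type*} (A : V → V → Prop) (S : Set V) : ℕ :=
  sSup ((fun v => outDegOn A S v) '' S)

/-- The maximum out-degree `Δ⁺(D)`. -/
noncomputable def maxOutDeg {V : Type*} (A : V → V → Prop) : ℕ :=
  sSup (Set.range (outDeg A))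

namespace Stmt15

variable {V : Type*} [Fintype V] [DecidableEq V] (A : V → V → Prop) [DecidableRel A]

/-- out-degree as a Finset card -/
def dp (v : V) : ℕ := (Finset.univ.filter (fun w => A v w)).card

/-- number of directed walks of length `k` ending in `v` -/
def W : ℕ → V → ℕ
  | 0, _ => 1
  | (k+1), v => ∑ u ∈ Finset.univ.filter (fun u => A u v), W k u

lemma sum_W_succ (k : ℕ) : ∑ v, W A (k+1) v = ∑ u, dp A u * W A k u := by
  have h1 : ∀ v : V, W A (k+1) v = ∑ u, if A u v then W A k u else 0 := by
    intro v
    show (∑ u ∈ Finset.univ.filter (fun u => A u v), W A k u) = _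
    rw [Finset.sum_filter]
  calc ∑ v, W A (k+1) v = ∑ v, ∑ u, if A u v then W A k u else 0 :=
        Finset.sum_congr rfl fun v _ => h1 v
    _ = ∑ u, ∑ v, if A u v then W A k u else 0 := Finset.sum_comm
    _ = ∑ u, dp A u * W A k u := by
        refine Finset.sum_congr rfl fun u _ => ?_
        rw [← Finset.sum_filter, Finset.sum_const, smul_eq_mul]
        rfl

lemma sum_W_le (Δ : ℕ) (hΔ : ∀ v, dp A v ≤ Δ) :
    ∀ k, ∑ v, W A k v ≤ Fintype.card V * Δ ^ k
  | 0 => by simp [W]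
  | (k+1) => by
      rw [sum_W_succ]
      calc ∑ u, dp A u * W A k u ≤ ∑ u, Δ * W A k u :=
            Finset.sum_le_sum fun u _ => Nat.mul_le_mul_right _ (hΔ u)
        _ = Δ * ∑ u, W A k u := by rw [Finset.mul_sum]
        _ ≤ Δ * (Fintype.card V * Δ ^ k) := Nat.mul_le_mul_left _ (sum_W_le Δ hΔ k)
        _ = Fintype.card V * Δ ^ (k+1) := by ring

lemma W_le (Δ : ℕ) (hΔ : ∀ v, dp A v ≤ Δ) (k : ℕ) (v : V) :
    W A k v ≤ Fintype.card V * Δ ^ k :=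
  le_trans (Finset.single_le_sum (fun u _ => Nat.zero_le (W A k u)) (Finset.mem_univ v))
    (sum_W_le A Δ hΔ k)

lemma pow_aux (a : ℕ) : ∀ k : ℕ, a^(k+1) + (k+1)*a^k ≤ (a+1)^(k+1)
  | 0 => by simp
  | (k+1) => by
    have ih := pow_aux a k
    have hexp : (a+1)*(a^(k+1) + (k+1)*a^k) = a^(k+2) + (k+2)*a^(k+1) + (k+1)*a^k := by ring
    calc a^(k+1+1) + (k+1+1)*a^(k+1) ≤ (a+1)*(a^(k+1)+(k+1)*a^k) := by
          rw [hexp]; exact Nat.le_add_right _ _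
      _ ≤ (a+1)*(a+1)^(k+1) := Nat.mul_le_mul_left _ ih
      _ = (a+1)^(k+1+1) := by ring

lemma two_mul_pow_le (Δ : ℕ) (h : 1 ≤ Δ) : 2 * Δ^(Δ+1) ≤ (Δ+1)^(Δ+1) := by
  have h1 := pow_aux Δ Δ
  have h2 : Δ^(Δ+1) ≤ (Δ+1)*Δ^Δ := by
    calc Δ^(Δ+1) = Δ^Δ * Δ := pow_succ Δ Δ
      _ ≤ Δ^Δ * (Δ+1) := Nat.mul_le_mul_left _ (Nat.le_succ Δ)
      _ = (Δ+1)*Δ^Δ := Nat.mul_comm _ _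
  omega

lemma key (Δ n : ℕ) (hn : 1 ≤ n) : n * Δ^((Δ+1)*n) < (Δ+1)^((Δ+1)*n) := by
  rcases Nat.eq_zero_or_pos Δ with h0 | hpos
  · subst h0
    have : (0:ℕ)^((0+1)*n) = 0 := by
      rw [zero_pow]; omega
    rw [this]
    simp
  · have h2 := two_mul_pow_le Δ hpos
    have hpow : (0:ℕ) < Δ^((Δ+1)*n) := Nat.pow_pos hpos
    calc n * Δ^((Δ+1)*n) < 2^n * Δ^((Δ+1)*n) :=
          mul_lt_mul_of_pos_right (Nat.lt_two_pow_self (n := n)) hpow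
      _ = (2*Δ^(Δ+1))^n := by rw [mul_pow, ← pow_mul]
      _ ≤ ((Δ+1)^(Δ+1))^n := Nat.pow_le_pow_left h2 n
      _ = (Δ+1)^((Δ+1)*n) := by rw [← pow_mul]

/-- the Perron-type weight -/
noncomputable def eta (Δ m : ℕ) (v : V) : ℚ :=
  ∑ k ∈ Finset.range m, (W A k v : ℚ) / ((Δ : ℚ) + 1)^k

lemma eta_nonneg (Δ m : ℕ) (v : V) : 0 ≤ eta A Δ m v :=
  Finset.sum_nonneg fun k _ => by positivity

lemma one_le_eta (Δ : ℕ) {m : ℕ} (hm : 0 < m) (v : V) : 1 ≤ eta A Δ m v := by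
  have h0 : ((W A 0 v : ℚ)) / ((Δ:ℚ)+1)^0 = 1 := by
    show ((1:ℕ):ℚ) / _ = 1
    simp
  calc (1:ℚ) = (W A 0 v : ℚ) / ((Δ:ℚ)+1)^0 := h0.symm
    _ ≤ eta A Δ m v :=
        Finset.single_le_sum (f := fun k => (W A k v : ℚ) / ((Δ:ℚ)+1)^k)
          (fun k _ => by positivity) (Finset.mem_range.2 hm)

/-- the key inequality: the weighted in-degree of `v` is less than `(Δ+1) η v`. -/
lemma S_lt (Δ : ℕ) (hΔ : ∀ v, dp A v ≤ Δ) (v : V) :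
    (∑ u ∈ Finset.univ.filter (fun u => A u v), eta A Δ ((Δ+1) * Fintype.card V) u)
      < ((Δ:ℚ)+1) * eta A Δ ((Δ+1) * Fintype.card V) v := by
  have hn : 0 < Fintype.card V := Fintype.card_pos_iff.mpr ⟨v⟩
  set n := Fintype.card V with hn'
  set m := (Δ+1)*n with hm'
  have hm : 0 < m := Nat.mul_pos (Nat.succ_pos Δ) hn
  have hxpos : (0:ℚ) < ((Δ:ℚ)+1) := by positivity
  have hxk : ∀ k:ℕ, (0:ℚ) < ((Δ:ℚ)+1)^k := fun k => pow_pos hxpos k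
  have h1 : (∑ u ∈ Finset.univ.filter (fun u => A u v), eta A Δ m u)
      = ∑ k ∈ Finset.range m, (W A (k+1) v : ℚ) / ((Δ:ℚ)+1)^k := by
    unfold eta
    rw [Finset.sum_comm]
    refine Finset.sum_congr rfl fun k _ => ?_
    rw [← Finset.sum_div]
    congr 1
    rw [show W A (k+1) v = ∑ u ∈ Finset.univ.filter (fun u => A u v), W A k u from rfl]
    push_cast
    rfl
  have h2 : ∑ k ∈ Finset.range m, (W A (k+1) v : ℚ) / ((Δ:ℚ)+1)^k
      = ((Δ:ℚ)+1) * (∑ k ∈ Finset.range m, (W A (k+1) v : ℚ) / ((Δ:ℚ)+1)^(k+1)) := by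
    rw [Finset.mul_sum]
    refine Finset.sum_congr rfl fun k _ => ?_
    rw [pow_succ]
    have := (hxk k).ne'
    field_simp
  have h3 : (∑ k ∈ Finset.range m, (W A (k+1) v : ℚ) / ((Δ:ℚ)+1)^(k+1))
      = eta A Δ m v - 1 + (W A m v : ℚ)/((Δ:ℚ)+1)^m := by
    have hs' := Finset.sum_range_succ' (fun k => (W A k v : ℚ) / ((Δ:ℚ)+1)^k) m
    have hs := Finset.sum_range_succ (fun k => (W A k v : ℚ) / ((Δ:ℚ)+1)^k) m
    have hf0 : (W A 0 v : ℚ)/((Δ:ℚ)+1)^0 = 1 := by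
      show ((1:ℕ):ℚ) / _ = 1
      simp
    rw [hf0] at hs'
    show (∑ k ∈ Finset.range m, (fun k => (W A k v : ℚ) / ((Δ:ℚ)+1)^k) (k+1)) = _
    unfold eta
    rw [hs] at hs'
    linarith [hs']
  have h5 : (W A m v : ℚ) < ((Δ:ℚ)+1)^m := by
    have hW := W_le A Δ hΔ m v
    have hkey : n * Δ^m < (Δ+1)^m := by rw [hm']; exact key Δ n hn
    have hlt : W A m v < (Δ+1)^m := lt_of_le_of_lt hW hkey
    calc (W A m v:ℚ) < (((Δ+1)^m : ℕ):ℚ) := by exact_mod_cast hlt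
      _ = ((Δ:ℚ)+1)^m := by push_cast; ring
  rw [h1, h2, h3]
  have h6 : (W A m v:ℚ)/((Δ:ℚ)+1)^m < 1 := (div_lt_one (hxk m)).2 h5
  have := eta_nonneg A Δ m v
  nlinarith

end Stmt15

/-- **Alon.** Let `D` be a digraph of maximum out-degree `Δ⁺` and let
`d₁, …, d_p` be non-negative integers with `d₁ + ⋯ + d_p + (p − 1) ≥ 2Δ⁺`. Then `D` has
a `p`-partition `(V₁, …, V_p)` with `Δ⁺(D⟨Vᵢ⟩) ≤ dᵢ` for every `i ∈ [p]`. -/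
theorem stmt15 {V : Type*} [Fintype V]
    (A : V → V → Prop) (hirr : ∀ v, ¬ A v v)
    (p : ℕ) (hp : 0 < p) (d : Fin p → ℕ)
    (hsum : 2 * maxOutDeg A ≤ (∑ i, d i) + (p - 1)) :
    ∃ P : Fin p → Set V,
      Pairwise (fun i j => Disjoint (P i) (P j)) ∧
      (⋃ i, P i) = Set.univ ∧
      ∀ i, maxOutDegOn A (P i) ≤ d i := by
  classical
  letI : DecidableRel A := fun a b => Classical.propDecidable _
  set Δ := maxOutDeg A with hΔdef
  have houtdeg : ∀ v, outDeg A v = Stmt15.dp A v := by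
    intro v
    rw [outDeg, show {w | A v w} = (↑(Finset.univ.filter (fun w => A v w)) : Set V) from
      by ext w; simp]
    exact Set.ncard_coe_finset _
  have hdp : ∀ v, Stmt15.dp A v ≤ Δ := by
    intro v
    rw [← houtdeg]
    exact le_csSup (Set.Finite.bddAbove (Set.finite_range (outDeg A)))
      (Set.mem_range_self v)
  set n := Fintype.card V with hndef
  set m := (Δ+1)*n with hmdef
  set η : V → ℚ := Stmt15.eta A Δ m with hηdef
  have hη1 : ∀ v : V, 1 ≤ η v := by
    intro v
    have hn : 0 < n := Fintype.card_pos_iff.mpr ⟨v⟩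
    exact Stmt15.one_le_eta A Δ (Nat.mul_pos (Nat.succ_pos Δ) hn) v
  have hηpos : ∀ v : V, (0:ℚ) < η v := fun v => lt_of_lt_of_le one_pos (hη1 v)
  have hKnat : 2*Δ + 1 ≤ ∑ i, (d i + 1) := by
    have h1 : ∑ i : Fin p, (d i + 1) = (∑ i, d i) + p := by
      rw [Finset.sum_add_distrib]
      simp
    omega
  haveI : Nonempty (Fin p) := ⟨⟨0, hp⟩⟩
  set Φ : (V → Fin p) → ℚ := fun c => ∑ u, ∑ w,
    (if A u w ∧ c u = c w then η u / ((d (c u) : ℚ)+1) else 0) with hΦdef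
  obtain ⟨c, -, hmin⟩ := Finset.exists_min_image Finset.univ Φ
    ⟨Classical.arbitrary _, Finset.mem_univ _⟩
  have hdpos : ∀ j : Fin p, (0:ℚ) < (d j : ℚ)+1 := fun j => by positivity
  have main : ∀ v, (Finset.univ.filter (fun w => A v w ∧ c w = c v)).card ≤ d (c v) := by
    intro v
    by_contra hbad0
    push_neg at hbad0
    set Out : Fin p → ℕ := fun j => (Finset.univ.filter (fun w => A v w ∧ c w = j)).card
      with hOutdef
    set Inn : Fin p → ℚ := fun j => ∑ u ∈ Finset.univ.filter (fun u => A u v ∧ c u = j), η u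
      with hInndef
    set B : Fin p → ℚ := fun j => (η v * (Out j : ℚ) + Inn j) / ((d j : ℚ)+1) with hBdef
    have hbad : d (c v) < Out (c v) := hbad0
    have hInnNonneg : ∀ j, 0 ≤ Inn j := fun j =>
      Finset.sum_nonneg fun u _ => le_of_lt (hηpos u)
    -- sum of Out over classes
    have hsumOut : ∑ j, Out j = Stmt15.dp A v := by
      have h1 : ∀ j, Out j = ∑ w, if A v w ∧ c w = j then 1 else 0 := by
        intro j
        show (Finset.univ.filter (fun w => A v w ∧ c w = j)).card = _
        rw [Finset.card_filter]
      calc ∑ j, Out j = ∑ j, ∑ w, (if A v w ∧ c w = j then 1 else 0) :=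
            Finset.sum_congr rfl fun j _ => h1 j
        _ = ∑ w, ∑ j, (if A v w ∧ c w = j then 1 else 0) := Finset.sum_comm
        _ = ∑ w, (if A v w then 1 else 0) := by
            refine Finset.sum_congr rfl fun w _ => ?_
            by_cases h : A v w
            · simp [h]
            · simp [h]
        _ = Stmt15.dp A v := by
            rw [← Finset.sum_filter]
            simp [Stmt15.dp]
    have hsumInn : ∑ j, Inn j = ∑ u ∈ Finset.univ.filter (fun u => A u v), η u := by
      have h1 : ∀ j, Inn j = ∑ u, if A u v ∧ c u = j then η u else 0 := by
        intro j
        show (∑ u ∈ Finset.univ.filter (fun u => A u v ∧ c u = j), η u) = _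
        rw [Finset.sum_filter]
      calc ∑ j, Inn j = ∑ j, ∑ u, (if A u v ∧ c u = j then η u else 0) :=
            Finset.sum_congr rfl fun j _ => h1 j
        _ = ∑ u, ∑ j, (if A u v ∧ c u = j then η u else 0) := Finset.sum_comm
        _ = ∑ u, (if A u v then η u else 0) := by
            refine Finset.sum_congr rfl fun u _ => ?_
            by_cases h : A u v
            · simp [h]
            · simp [h]
        _ = _ := (Finset.sum_filter _ _).symm
    -- the weighted sum of the B's
    have hsumB : ∑ j, ((d j : ℚ)+1) * B j
        = η v * (Stmt15.dp A v : ℚ) + ∑ u ∈ Finset.univ.filter (fun u => A u v), η u := by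
      have h1 : ∀ j, ((d j:ℚ)+1) * B j = η v * (Out j : ℚ) + Inn j := by
        intro j
        show ((d j:ℚ)+1) * ((η v * (Out j : ℚ) + Inn j) / ((d j : ℚ)+1)) = _
        field_simp
      rw [Finset.sum_congr rfl fun j _ => h1 j, Finset.sum_add_distrib, ← Finset.mul_sum,
        ← hsumInn]
      have h2 : (∑ j, ((Out j : ℚ))) = (Stmt15.dp A v : ℚ) := by
        rw [← Nat.cast_sum, hsumOut]
      rw [h2]
    -- pigeonhole: some class has small B
    have hS := Stmt15.S_lt A Δ hdp v
    rw [← hndef, ← hmdef, ← hηdef] at hS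
    have hKQ : ((2*Δ+1 : ℕ):ℚ) ≤ ∑ j, ((d j:ℚ)+1) := by
      rw [show (∑ j, ((d j:ℚ)+1)) = ((∑ j, (d j + 1) : ℕ) : ℚ) by push_cast; ring]
      exact_mod_cast hKnat
    push_cast at hKQ
    have hdpQ : (Stmt15.dp A v : ℚ) ≤ (Δ:ℚ) := by exact_mod_cast hdp v
    have hlt : ∑ j, ((d j:ℚ)+1) * B j < (∑ j, ((d j:ℚ)+1)) * η v := by
      rw [hsumB]
      have h4 : η v * (Stmt15.dp A v : ℚ) ≤ η v * (Δ:ℚ) :=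
        mul_le_mul_of_nonneg_left hdpQ (le_of_lt (hηpos v))
      have h5 : (2*(Δ:ℚ)+1) * η v ≤ (∑ j, ((d j:ℚ)+1)) * η v :=
        mul_le_mul_of_nonneg_right hKQ (le_of_lt (hηpos v))
      nlinarith [hS]
    have hexj : ∃ j, B j < η v := by
      by_contra hno
      push_neg at hno
      have h3 : (∑ j, ((d j:ℚ)+1)) * η v ≤ ∑ j, ((d j:ℚ)+1)*B j := by
        rw [Finset.sum_mul]
        exact Finset.sum_le_sum fun j _ =>
          mul_le_mul_of_nonneg_left (hno j) (le_of_lt (hdpos j))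
      exact absurd hlt (not_lt.2 h3)
    obtain ⟨j, hj⟩ := hexj
    have hBcv : η v ≤ B (c v) := by
      show η v ≤ (η v * (Out (c v) : ℚ) + Inn (c v)) / ((d (c v) : ℚ)+1)
      rw [le_div_iff₀ (hdpos (c v))]
      have h1 : η v * ((d (c v):ℚ)+1) ≤ η v * (Out (c v) : ℚ) := by
        apply mul_le_mul_of_nonneg_left _ (le_of_lt (hηpos v))
        have h2 : (d (c v) + 1 : ℕ) ≤ Out (c v) := hbad
        exact_mod_cast h2
      have := hInnNonneg (c v)
      linarith
    have hjne : j ≠ c v := by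
      rintro rfl
      exact absurd hBcv (not_le.2 hj)
    set c' := Function.update c v j with hc'def
    have hNoSelf : ¬ A v v := hirr v
    have hcv'j : c' v = j := Function.update_self v j c
    have hc'w : ∀ w : V, w ≠ v → c' w = c w := fun w hw => Function.update_of_ne hw j c
    -- decomposition of the potential
    have hsplit : ∀ e : V → Fin p, Φ e
        = (∑ w, (if A v w ∧ e v = e w then η v / ((d (e v) : ℚ)+1) else 0))
          + ((∑ u ∈ Finset.univ.erase v,
                (if A u v ∧ e u = e v then η u / ((d (e u) : ℚ)+1) else 0))
            + ∑ u ∈ Finset.univ.erase v, ∑ w ∈ Finset.univ.erase v,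
                (if A u w ∧ e u = e w then η u / ((d (e u) : ℚ)+1) else 0)) := by
      intro e
      show (∑ u, ∑ w, (if A u w ∧ e u = e w then η u / ((d (e u) : ℚ)+1) else 0)) = _
      rw [← Finset.sum_erase_add _ _ (Finset.mem_univ v)]
      have h1 : ∀ u : V, (∑ w, (if A u w ∧ e u = e w then η u / ((d (e u) : ℚ)+1) else 0))
          = (if A u v ∧ e u = e v then η u / ((d (e u) : ℚ)+1) else 0)
            + ∑ w ∈ Finset.univ.erase v,
                (if A u w ∧ e u = e w then η u / ((d (e u) : ℚ)+1) else 0) := by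
        intro u
        rw [← Finset.sum_erase_add _ _ (Finset.mem_univ v)]
        ring
      rw [Finset.sum_congr rfl fun u _ => h1 u, Finset.sum_add_distrib]
      ring
    have hTermA : (∑ w, (if A v w ∧ c v = c w then η v / ((d (c v) : ℚ)+1) else 0))
        = η v * ((Out (c v) : ℚ)) / ((d (c v):ℚ)+1) := by
      have h1 : ∀ w, (if A v w ∧ c v = c w then η v / ((d (c v) : ℚ)+1) else 0)
          = (if A v w ∧ c w = c v then η v / ((d (c v) : ℚ)+1) else 0) := fun w =>
        if_congr (and_congr Iff.rfl eq_comm) rfl rfl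
      rw [Finset.sum_congr rfl fun w _ => h1 w, ← Finset.sum_filter, Finset.sum_const,
        nsmul_eq_mul]
      show ((Out (c v) : ℚ)) * (η v / ((d (c v):ℚ)+1)) = _
      ring
    have hTermA' : (∑ w, (if A v w ∧ c' v = c' w then η v / ((d (c' v) : ℚ)+1) else 0))
        = η v * ((Out j : ℚ)) / ((d j:ℚ)+1) := by
      have h1 : ∀ w, (if A v w ∧ c' v = c' w then η v / ((d (c' v) : ℚ)+1) else 0)
          = (if A v w ∧ c w = j then η v / ((d j : ℚ)+1) else 0) := by
        intro w
        by_cases hw : A v w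
        · have hwv : w ≠ v := fun h => hNoSelf (h ▸ hw)
          rw [hcv'j, hc'w w hwv]
          exact if_congr (and_congr Iff.rfl eq_comm) rfl rfl
        · rw [if_neg (fun h => hw h.1), if_neg (fun h => hw h.1)]
      rw [Finset.sum_congr rfl fun w _ => h1 w, ← Finset.sum_filter, Finset.sum_const,
        nsmul_eq_mul]
      show ((Out j : ℚ)) * (η v / ((d j:ℚ)+1)) = _
      ring
    have hfeq : ∀ q : Fin p, (Finset.univ.erase v).filter (fun u => A u v ∧ c u = q)
        = Finset.univ.filter (fun u => A u v ∧ c u = q) := by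
      intro q
      ext u
      simp only [Finset.mem_filter, Finset.mem_erase, Finset.mem_univ, true_and, and_true]
      constructor
      · rintro ⟨_, h⟩; exact h
      · intro h; exact ⟨fun he => hNoSelf (he ▸ h.1), h⟩
    have hTermB : (∑ u ∈ Finset.univ.erase v,
          (if A u v ∧ c u = c v then η u / ((d (c u) : ℚ)+1) else 0))
        = Inn (c v) / ((d (c v):ℚ)+1) := by
      have h1 : ∀ u, (if A u v ∧ c u = c v then η u / ((d (c u) : ℚ)+1) else 0)
          = (if A u v ∧ c u = c v then η u / ((d (c v) : ℚ)+1) else 0) := by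
        intro u
        by_cases h : A u v ∧ c u = c v
        · rw [if_pos h, if_pos h, h.2]
        · rw [if_neg h, if_neg h]
      rw [Finset.sum_congr rfl fun u _ => h1 u, ← Finset.sum_filter, hfeq (c v)]
      show _ = (∑ u ∈ Finset.univ.filter (fun u => A u v ∧ c u = c v), η u) / ((d (c v):ℚ)+1)
      rw [Finset.sum_div]
    have hTermB' : (∑ u ∈ Finset.univ.erase v,
          (if A u v ∧ c' u = c' v then η u / ((d (c' u) : ℚ)+1) else 0))
        = Inn j / ((d j:ℚ)+1) := by
      have h1 : ∀ u ∈ Finset.univ.erase v,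
          (if A u v ∧ c' u = c' v then η u / ((d (c' u) : ℚ)+1) else 0)
          = (if A u v ∧ c u = j then η u / ((d j : ℚ)+1) else 0) := by
        intro u hu
        have huv : u ≠ v := (Finset.mem_erase.1 hu).1
        rw [hc'w u huv, hcv'j]
        by_cases h : A u v ∧ c u = j
        · rw [if_pos h, if_pos h, h.2]
        · rw [if_neg h, if_neg h]
      rw [Finset.sum_congr rfl h1, ← Finset.sum_filter, hfeq j]
      show _ = (∑ u ∈ Finset.univ.filter (fun u => A u v ∧ c u = j), η u) / ((d j:ℚ)+1)
      rw [Finset.sum_div]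
    have hTermC : (∑ u ∈ Finset.univ.erase v, ∑ w ∈ Finset.univ.erase v,
          (if A u w ∧ c' u = c' w then η u / ((d (c' u) : ℚ)+1) else 0))
        = ∑ u ∈ Finset.univ.erase v, ∑ w ∈ Finset.univ.erase v,
          (if A u w ∧ c u = c w then η u / ((d (c u) : ℚ)+1) else 0) := by
      refine Finset.sum_congr rfl fun u hu => Finset.sum_congr rfl fun w hw => ?_
      rw [hc'w u (Finset.mem_erase.1 hu).1, hc'w w (Finset.mem_erase.1 hw).1]
    have hΦlt : Φ c' < Φ c := by
      rw [hsplit c, hsplit c', hTermA, hTermA', hTermB, hTermB', hTermC]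
      have e1 : η v * ((Out j : ℚ)) / ((d j:ℚ)+1) + Inn j / ((d j:ℚ)+1) = B j := by
        show _ = (η v * (Out j : ℚ) + Inn j) / ((d j : ℚ)+1)
        ring
      have e2 : η v * ((Out (c v) : ℚ)) / ((d (c v):ℚ)+1) + Inn (c v) / ((d (c v):ℚ)+1)
          = B (c v) := by
        show _ = (η v * (Out (c v) : ℚ) + Inn (c v)) / ((d (c v) : ℚ)+1)
        ring
      have h3 : B j < B (c v) := lt_of_lt_of_le hj hBcv
      linarith
    exact absurd (hmin c' (Finset.mem_univ _)) (not_le.2 hΦlt)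
  -- assemble the partition
  refine ⟨fun i => {v | c v = i}, ?_, ?_, ?_⟩
  · intro i j hij
    rw [Set.disjoint_left]
    rintro v (hv1 : c v = i) (hv2 : c v = j)
    exact hij (hv1 ▸ hv2)
  · ext v
    simp only [Set.mem_iUnion, Set.mem_setOf_eq, Set.mem_univ, iff_true]
    exact ⟨c v, rfl⟩
  · intro i
    rw [maxOutDegOn]
    rcases Set.eq_empty_or_nonempty
      ((fun v => outDegOn A {v | c v = i} v) '' {v | c v = i}) with he | hne
    · rw [he, csSup_empty]
      exact Nat.zero_le _
    · apply csSup_le hne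
      rintro x ⟨v, hv, rfl⟩
      show outDegOn A {v | c v = i} v ≤ d i
      have hv' : c v = i := hv
      have heq : outDegOn A {v | c v = i} v
          = (Finset.univ.filter (fun w => A v w ∧ c w = c v)).card := by
        rw [outDegOn, show {w | w ∈ {v | c v = i} ∧ A v w}
          = (↑(Finset.univ.filter (fun w => A v w ∧ c w = c v)) : Set V) from
          by ext w; simp [hv']; tauto]
        exact Set.ncard_coe_finset _
      rw [heq, ← hv']
      exact main v
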